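/- For the PU on–off sampling model under uniform sampling with Γ_c = e^{−λ_f T_c/u}, let w_1,…,w_N be real weights with ∑_{i=1}^{N} w_i = 1, and define the weighted averaging estimator ũ_w(z) = ∑_{i=1}^{N} w_i z_i. Then its mean squared error satisfies V_{ũ_w,N} := ∑_{z ∈ {0,1}^N} (ũ_w(z) − u)² P(z) = u(1−u)·( ∑_{i=1}^{N} w_i² + 2·∑_{j=1}^{N−1} Γ_c^{j} · ∑_{i=1}^{N−j} w_i w_{i+j} ). -/

import Mathlib

open Finset

/-- Transition probabilities of the PU on-off process:
`transProb u lf t x y = Pr_{xy}(t)` where `false` = idle, `true` = active. -/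
noncomputable def transProb (u lf t : ℝ) : Bool → Bool → ℝ
  | false, false => 1 - u + u * Real.exp (-(lf * t) / u)
  | false, true  => 1 - (1 - u + u * Real.exp (-(lf * t) / u))
  | true,  true  => u + (1 - u) * Real.exp (-(lf * t) / u)
  | true,  false => 1 - (u + (1 - u) * Real.exp (-(lf * t) / u))

/-- Probability of a binary sample sequence `z` of length `n + 1`
with inter-sample times `T 1, …, T n`. -/
noncomputable def seqProb (u lf : ℝ) {n : ℕ} (T : ℕ → ℝ) (z : Fin (n + 1) → Bool) : ℝ :=
  (if z 0 then u else 1 - u) *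
    ∏ k : Fin n, transProb u lf (T (k.val + 1)) (z k.castSucc) (z k.succ)

/-- indicator minus u -/
noncomputable def phiF (u : ℝ) (b : Bool) : ℝ := (if b then (1:ℝ) else 0) - u

lemma trans_row_sum (u lf t : ℝ) (x : Bool) :
    ∑ b : Bool, transProb u lf t x b = 1 := by
  cases x <;> simp [transProb] <;> ring

lemma trans_eigen (u lf t : ℝ) (x : Bool) :
    ∑ b : Bool, transProb u lf t x b * phiF u b
      = Real.exp (-(lf * t) / u) * phiF u x := by
  cases x <;> simp [transProb, phiF] <;> ring

lemma trans_stat (u lf t : ℝ) (y : Bool) :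
    (1 - u) * transProb u lf t false y + u * transProb u lf t true y
      = (if y then u else 1 - u) := by
  cases y <;> simp [transProb] <;> ring

lemma sum_pi_snoc {N : ℕ} (F : (Fin (N + 1) → Bool) → ℝ) :
    ∑ z : Fin (N + 1) → Bool, F z
      = ∑ b : Bool, ∑ z : Fin N → Bool, F (Fin.snoc z b) := by
  rw [← (Fin.snocEquiv (fun _ => Bool)).sum_comp F, Fintype.sum_prod_type]
  rfl

lemma seqProb_snoc (u lf : ℝ) (T : ℕ → ℝ) {N : ℕ} (z : Fin (N + 1) → Bool) (b : Bool) :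
    seqProb u lf T (Fin.snoc z b) =
      seqProb u lf T z * transProb u lf (T (N + 1)) (z (Fin.last N)) b := by
  unfold seqProb
  rw [Fin.prod_univ_castSucc]
  have h0 : (Fin.snoc z b : Fin (N + 2) → Bool) 0 = z 0 := by
    have : (0 : Fin (N + 2)) = Fin.castSucc 0 := rfl
    rw [this, Fin.snoc_castSucc]
  rw [h0]
  simp only [Fin.succ_last, Fin.snoc_last, Fin.snoc_castSucc, Fin.succ_castSucc, Fin.coe_castSucc,
    Fin.val_last]
  ring

lemma peel (u lf : ℝ) (T : ℕ → ℝ) {N : ℕ} (G : (Fin (N + 1) → Bool) → ℝ) (f : Bool → ℝ) :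
    ∑ z : Fin (N + 2) → Bool,
        seqProb u lf T z * G (fun i => z i.castSucc) * f (z (Fin.last (N + 1)))
      = ∑ z : Fin (N + 1) → Bool,
          seqProb u lf T z * G z *
            ∑ b : Bool, transProb u lf (T (N + 1)) (z (Fin.last N)) b * f b := by
  rw [sum_pi_snoc (fun z => seqProb u lf T z * G (fun i => z i.castSucc) * f (z (Fin.last (N+1))))]
  rw [Finset.sum_comm]
  apply Finset.sum_congr rfl
  intro z _
  rw [Finset.mul_sum]
  apply Finset.sum_congr rfl
  intro b _
  rw [seqProb_snoc]
  have h1 : (fun i => (Fin.snoc z b : Fin (N+2) → Bool) i.castSucc) = z := by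
    funext i; simp
  rw [h1, Fin.snoc_last]
  ring

lemma marginal (u lf : ℝ) (T : ℕ → ℝ) : ∀ (N : ℕ) (g : Bool → ℝ),
    ∑ z : Fin (N + 1) → Bool, seqProb u lf T z * g (z (Fin.last N))
      = (1 - u) * g false + u * g true := by
  intro N
  induction N with
  | zero =>
      intro g
      rw [sum_pi_snoc (fun z => seqProb u lf T z * g (z (Fin.last 0)))]
      simp [seqProb, Fin.snoc, Fin.last]
      ring
  | succ N ih =>
      intro g
      have h := peel u lf T (N := N) (fun _ => (1:ℝ)) g
      simp only [mul_one] at h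
      rw [h]
      have h2 := ih (fun x => ∑ b : Bool, transProb u lf (T (N + 1)) x b * g b)
      have h3 : ∀ z : Fin (N+1) → Bool,
          seqProb u lf T z * ∑ b : Bool, transProb u lf (T (N + 1)) (z (Fin.last N)) b * g b
          = seqProb u lf T z * (fun x => ∑ b : Bool, transProb u lf (T (N + 1)) x b * g b) (z (Fin.last N)) := fun z => rfl
      rw [Finset.sum_congr rfl (fun z _ => h3 z), h2]
      have hf := trans_stat u lf (T (N+1)) false
      have ht := trans_stat u lf (T (N+1)) true
      simp only [Fintype.sum_bool] at *
      norm_num at hf ht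
      linear_combination g true * ht + g false * hf

lemma tail (u lf : ℝ) (T : ℕ → ℝ) : ∀ (m N : ℕ) (F : (Fin (N + 1) → Bool) → ℝ),
    ∑ z : Fin (N + m + 1) → Bool,
        seqProb u lf T z * F (fun i => z (Fin.castLE (by omega) i))
      = ∑ z : Fin (N + 1) → Bool, seqProb u lf T z * F z := by
  intro m
  induction m with
  | zero =>
      intro N F
      apply Finset.sum_congr rfl
      intro z _
      congr 1
  | succ m ih =>
      intro N F
      have h := peel u lf T (N := N + m)
        (fun z => F (fun i => z (Fin.castLE (by omega) i))) (fun _ => (1:ℝ))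
      simp only [mul_one, trans_row_sum] at h
      calc ∑ z : Fin (N + (m+1) + 1) → Bool,
              seqProb u lf T z * F (fun i => z (Fin.castLE (by omega) i))
          = ∑ z : Fin (N + m + 2) → Bool,
              seqProb u lf T z *
                (fun (y : Fin (N+m+1) → Bool) => F (fun i => y (Fin.castLE (by omega) i)))
                  (fun i => z i.castSucc) := by
            apply Finset.sum_congr rfl; intro z _; rfl
        _ = ∑ z : Fin (N + m + 1) → Bool,
              seqProb u lf T z * F (fun i => z (Fin.castLE (by omega) i)) := h
        _ = _ := ih N F

lemma shiftL (u lf Tc : ℝ) : ∀ (m N : ℕ) (F : (Fin (N + 1) → Bool) → ℝ),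
    ∑ z : Fin (N + m + 1) → Bool,
        seqProb u lf (fun _ => Tc) z * F (fun i => z (Fin.castLE (by omega) i))
          * phiF u (z (Fin.last (N + m)))
      = (Real.exp (-(lf * Tc) / u)) ^ m *
        ∑ z : Fin (N + 1) → Bool,
          seqProb u lf (fun _ => Tc) z * F z * phiF u (z (Fin.last N)) := by
  intro m
  induction m with
  | zero =>
      intro N F
      rw [pow_zero, one_mul]
      apply Finset.sum_congr rfl
      intro z _
      congr 1
  | succ m ih =>
      intro N F
      have h := peel u lf (fun _ => Tc) (N := N + m)
        (fun z => F (fun i => z (Fin.castLE (by omega) i))) (phiF u)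
      simp only [trans_eigen] at h
      calc ∑ z : Fin (N + (m+1) + 1) → Bool,
              seqProb u lf (fun _ => Tc) z * F (fun i => z (Fin.castLE (by omega) i))
                * phiF u (z (Fin.last (N + m + 1)))
          = ∑ z : Fin (N + m + 2) → Bool,
              seqProb u lf (fun _ => Tc) z *
                (fun (y : Fin (N+m+1) → Bool) => F (fun i => y (Fin.castLE (by omega) i)))
                  (fun i => z i.castSucc) * phiF u (z (Fin.last (N + m + 1))) := by
            apply Finset.sum_congr rfl; intro z _; rfl
        _ = ∑ z : Fin (N + m + 1) → Bool,
              seqProb u lf (fun _ => Tc) z * F (fun i => z (Fin.castLE (by omega) i)) *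
                (Real.exp (-(lf * Tc) / u) * phiF u (z (Fin.last (N + m)))) := h
        _ = Real.exp (-(lf * Tc) / u) *
              ∑ z : Fin (N + m + 1) → Bool,
                seqProb u lf (fun _ => Tc) z * F (fun i => z (Fin.castLE (by omega) i)) *
                  phiF u (z (Fin.last (N + m))) := by
            rw [Finset.mul_sum]; apply Finset.sum_congr rfl; intro z _; ring
        _ = _ := by rw [ih N F, pow_succ]; ring

lemma twopoint (u lf Tc : ℝ) (N i j : ℕ) (hij : i ≤ j) (hj : j ≤ N) :
    ∑ z : Fin (N + 1) → Bool,
        seqProb u lf (fun _ => Tc) z * phiF u (z ⟨i, by omega⟩) * phiF u (z ⟨j, by omega⟩)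
      = u * (1 - u) * (Real.exp (-(lf * Tc) / u)) ^ (j - i) := by
  obtain ⟨m, rfl⟩ : ∃ m, N = j + m := ⟨N - j, by omega⟩
  obtain ⟨d, rfl⟩ : ∃ d, j = i + d := ⟨j - i, by omega⟩
  have hd : (i + d) - i = d := by omega
  rw [hd]
  have h1 := tail u lf (fun _ => Tc) m (i + d)
    (fun y => phiF u (y ⟨i, by omega⟩) * phiF u (y ⟨i + d, by omega⟩))
  have h2 := shiftL u lf Tc d i (fun y => phiF u (y (Fin.last i)))
  have h3 := marginal u lf (fun _ => Tc) i (fun x => phiF u x * phiF u x)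
  calc ∑ z : Fin (i + d + m + 1) → Bool,
          seqProb u lf (fun _ => Tc) z * phiF u (z ⟨i, by omega⟩) * phiF u (z ⟨i + d, by omega⟩)
      = ∑ z : Fin (i + d + m + 1) → Bool,
          seqProb u lf (fun _ => Tc) z *
            ((fun y : Fin (i + d + 1) → Bool => phiF u (y ⟨i, by omega⟩) * phiF u (y ⟨i + d, by omega⟩))
              (fun k => z (Fin.castLE (by omega) k))) := by
        apply Finset.sum_congr rfl; intro z _; rw [mul_assoc]; rfl
    _ = ∑ z : Fin (i + d + 1) → Bool,
          seqProb u lf (fun _ => Tc) z * (phiF u (z ⟨i, by omega⟩) * phiF u (z ⟨i + d, by omega⟩)) := h1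
    _ = ∑ z : Fin (i + d + 1) → Bool,
          seqProb u lf (fun _ => Tc) z *
            ((fun y : Fin (i + 1) → Bool => phiF u (y (Fin.last i))) (fun k => z (Fin.castLE (by omega) k)))
            * phiF u (z (Fin.last (i + d))) := by
        apply Finset.sum_congr rfl; intro z _; rw [mul_assoc]; rfl
    _ = (Real.exp (-(lf * Tc) / u)) ^ d *
          ∑ z : Fin (i + 1) → Bool,
            seqProb u lf (fun _ => Tc) z * phiF u (z (Fin.last i)) * phiF u (z (Fin.last i)) := h2
    _ = (Real.exp (-(lf * Tc) / u)) ^ d *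
          ∑ z : Fin (i + 1) → Bool,
            seqProb u lf (fun _ => Tc) z * (phiF u (z (Fin.last i)) * phiF u (z (Fin.last i))) := by
        rw [Finset.mul_sum, Finset.mul_sum]
        exact Finset.sum_congr rfl (fun z _ => by ring)
    _ = (Real.exp (-(lf * Tc) / u)) ^ d *
          ((1 - u) * (phiF u false * phiF u false) + u * (phiF u true * phiF u true)) := by rw [h3]
    _ = u * (1 - u) * (Real.exp (-(lf * Tc) / u)) ^ d := by
        simp [phiF]; ring

lemma twopoint_sym (u lf Tc : ℝ) (N i j : ℕ) (hi : i ≤ N) (hj : j ≤ N) :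
    ∑ z : Fin (N + 1) → Bool,
        seqProb u lf (fun _ => Tc) z * phiF u (z ⟨i, by omega⟩) * phiF u (z ⟨j, by omega⟩)
      = u * (1 - u) * (Real.exp (-(lf * Tc) / u)) ^ (max i j - min i j) := by
  rcases le_total i j with h | h
  · rw [max_eq_right h, min_eq_left h]
    exact twopoint u lf Tc N i j h hj
  · rw [max_eq_left h, min_eq_right h]
    rw [← twopoint u lf Tc N j i h hi]
    exact Finset.sum_congr rfl (fun z _ => by ring)

lemma comb (n : ℕ) (w : ℕ → ℝ) (G : ℝ) :
    ∑ i ∈ Finset.range (n + 1), ∑ j ∈ Finset.range (n + 1), w i * w j * G ^ (max i j - min i j)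
      = ∑ i ∈ Finset.range (n + 1), w i ^ 2
          + 2 * ∑ d ∈ Finset.Icc 1 n, G ^ d * ∑ i ∈ Finset.range (n + 1 - d), w i * w (i + d) := by
  set a : ℕ → ℕ → ℝ := fun i j => w i * w j * G ^ (max i j - min i j) with ha
  have hsym : ∀ i j, a i j = a j i := by
    intro i j; simp only [ha]; rw [max_comm, min_comm]; ring
  have hsplit : ∀ i ∈ Finset.range (n + 1), ∑ j ∈ Finset.range (n + 1), a i j
      = (∑ j ∈ Finset.range i, a i j) + a i i + ∑ j ∈ Finset.Ico (i + 1) (n + 1), a i j := by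
    intro i hi
    rw [Finset.mem_range] at hi
    rw [Finset.range_eq_Ico, ← Finset.sum_Ico_consecutive _ (Nat.zero_le i) (by omega : i ≤ n + 1),
      Finset.sum_eq_sum_Ico_succ_bot (by omega : i < n + 1), ← Finset.range_eq_Ico]
    ring
  rw [Finset.sum_congr rfl hsplit]
  rw [Finset.sum_add_distrib, Finset.sum_add_distrib]
  have hdiag : ∑ i ∈ Finset.range (n + 1), a i i = ∑ i ∈ Finset.range (n + 1), w i ^ 2 := by
    apply Finset.sum_congr rfl; intro i _; simp [ha]; ring
  -- lower triangle equals the target off-diagonal sum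
  have hlow : ∑ i ∈ Finset.range (n + 1), ∑ j ∈ Finset.range i, a i j
      = ∑ d ∈ Finset.Icc 1 n, G ^ d * ∑ i ∈ Finset.range (n + 1 - d), w i * w (i + d) := by
    rw [Finset.sum_sigma' (Finset.range (n + 1)) (fun i => Finset.range i) (fun p q => a p q)]
    have : ∀ d ∈ Finset.Icc 1 n, G ^ d * ∑ i ∈ Finset.range (n + 1 - d), w i * w (i + d)
        = ∑ i ∈ Finset.range (n + 1 - d), a (i + d) i := by
      intro d hd
      rw [Finset.mul_sum]
      apply Finset.sum_congr rfl
      intro i _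
      simp only [ha]
      rw [max_eq_left (by omega), min_eq_right (by omega)]
      have : i + d - i = d := by omega
      rw [this]; ring
    rw [Finset.sum_congr rfl this,
      Finset.sum_sigma' (Finset.Icc 1 n) (fun d => Finset.range (n + 1 - d)) (fun d i => a (i + d) i)]
    apply Finset.sum_nbij' (fun p => (⟨p.1 - p.2, p.2⟩ : (_ : ℕ) × ℕ))
      (fun p => (⟨p.2 + p.1, p.2⟩ : (_ : ℕ) × ℕ))
    · intro p hp
      simp only [Finset.mem_sigma, Finset.mem_range, Finset.mem_Icc] at hp ⊢
      omega
    · intro p hp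
      simp only [Finset.mem_sigma, Finset.mem_range, Finset.mem_Icc] at hp ⊢
      omega
    · intro p hp
      simp only [Finset.mem_sigma, Finset.mem_range] at hp
      have : p.2 + (p.1 - p.2) = p.1 := by omega
      simp [this]
    · intro p hp
      simp only [Finset.mem_sigma, Finset.mem_range, Finset.mem_Icc] at hp
      have : p.2 + p.1 - p.2 = p.1 := by omega
      simp [this]
    · intro p hp
      simp only [Finset.mem_sigma, Finset.mem_range] at hp
      have : p.2 + (p.1 - p.2) = p.1 := by omega
      simp [this]
  -- upper triangle equals lower triangle
  have hup : ∑ i ∈ Finset.range (n + 1), ∑ j ∈ Finset.Ico (i + 1) (n + 1), a i j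
      = ∑ i ∈ Finset.range (n + 1), ∑ j ∈ Finset.range i, a i j := by
    rw [Finset.sum_sigma' (Finset.range (n + 1)) (fun i => Finset.Ico (i + 1) (n + 1)) (fun p q => a p q),
      Finset.sum_sigma' (Finset.range (n + 1)) (fun i => Finset.range i) (fun p q => a p q)]
    apply Finset.sum_nbij' (fun p => (⟨p.2, p.1⟩ : (_ : ℕ) × ℕ))
      (fun p => (⟨p.2, p.1⟩ : (_ : ℕ) × ℕ))
    · intro p hp
      simp only [Finset.mem_sigma, Finset.mem_range, Finset.mem_Ico] at hp ⊢
      omega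
    · intro p hp
      simp only [Finset.mem_sigma, Finset.mem_range, Finset.mem_Ico] at hp ⊢
      omega
    · intro p _; rfl
    · intro p _; rfl
    · intro p _; exact hsym p.1 p.2
  rw [hdiag, hlow, hup, hlow]
  ring


/-- mean squared error of the weighted averaging estimator
`ũ_w(z) = ∑ w_i z_i` (weights summing to 1, indexed 0-based here, so the
paper's `w_i` is `w (i-1)`) under uniform sampling with `Γ_c = e^{-λ_f T_c/u}`
and `N = n + 1` samples. -/
theorem weighted_estimator_mse (u lf Tc : ℝ) (hu : 0 < u) (hu1 : u < 1)
    (hlf : 0 < lf) (hTc : 0 < Tc) (n : ℕ) (hn : 1 ≤ n) (w : ℕ → ℝ)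
    (hw : ∑ i ∈ Finset.range (n + 1), w i = 1) :
    ∑ z : Fin (n + 1) → Bool,
        ((∑ i : Fin (n + 1), w i.val * (if z i then (1 : ℝ) else 0)) - u) ^ 2
          * seqProb u lf (fun _ => Tc) z
      = u * (1 - u) *
          (∑ i ∈ Finset.range (n + 1), w i ^ 2
            + 2 * ∑ j ∈ Finset.Icc 1 n, (Real.exp (-(lf * Tc) / u)) ^ j *
                ∑ i ∈ Finset.range (n + 1 - j), w i * w (i + j)) := by
  have hsub : ∀ z : Fin (n + 1) → Bool,
      (∑ i : Fin (n + 1), w i.val * (if z i then (1:ℝ) else 0)) - u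
        = ∑ i : Fin (n + 1), w i.val * phiF u (z i) := by
    intro z
    have h1 : ∑ i : Fin (n + 1), w i.val * phiF u (z i)
        = (∑ i : Fin (n + 1), w i.val * (if z i then (1:ℝ) else 0))
          - (∑ i : Fin (n + 1), w i.val) * u := by
      rw [Finset.sum_mul, ← Finset.sum_sub_distrib]
      apply Finset.sum_congr rfl; intro i _; simp only [phiF]; ring
    rw [h1, Fin.sum_univ_eq_sum_range (fun i => w i) (n + 1), hw]; ring
  calc ∑ z : Fin (n + 1) → Bool,
          ((∑ i : Fin (n + 1), w i.val * (if z i then (1:ℝ) else 0)) - u) ^ 2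
            * seqProb u lf (fun _ => Tc) z
      = ∑ z : Fin (n + 1) → Bool, ∑ i : Fin (n + 1), ∑ j : Fin (n + 1),
          w i.val * w j.val *
            (seqProb u lf (fun _ => Tc) z * phiF u (z i) * phiF u (z j)) := by
        apply Finset.sum_congr rfl; intro z _
        rw [hsub z, pow_two, Finset.sum_mul_sum, Finset.sum_mul]
        refine Finset.sum_congr rfl fun i _ => ?_
        rw [Finset.sum_mul]
        exact Finset.sum_congr rfl fun j _ => by ring
    _ = ∑ i : Fin (n + 1), ∑ j : Fin (n + 1), ∑ z : Fin (n + 1) → Bool,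
          w i.val * w j.val *
            (seqProb u lf (fun _ => Tc) z * phiF u (z i) * phiF u (z j)) := by
        rw [Finset.sum_comm]
        exact Finset.sum_congr rfl fun i _ => Finset.sum_comm
    _ = ∑ i : Fin (n + 1), ∑ j : Fin (n + 1),
          w i.val * w j.val *
            (u * (1 - u) * (Real.exp (-(lf * Tc) / u)) ^ (max i.val j.val - min i.val j.val)) := by
        refine Finset.sum_congr rfl fun i _ => Finset.sum_congr rfl fun j _ => ?_
        rw [← Finset.mul_sum]
        congr 1
        exact twopoint_sym u lf Tc n i.val j.val (Nat.lt_succ_iff.mp i.isLt)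
          (Nat.lt_succ_iff.mp j.isLt)
    _ = ∑ i ∈ Finset.range (n + 1), ∑ j ∈ Finset.range (n + 1),
          w i * w j *
            (u * (1 - u) * (Real.exp (-(lf * Tc) / u)) ^ (max i j - min i j)) := by
        rw [← Fin.sum_univ_eq_sum_range (fun i => ∑ j ∈ Finset.range (n + 1),
          w i * w j * (u * (1 - u) * (Real.exp (-(lf * Tc) / u)) ^ (max i j - min i j))) (n + 1)]
        refine Finset.sum_congr rfl fun i _ => ?_
        exact Fin.sum_univ_eq_sum_range (fun j => w i.val * w j *
          (u * (1 - u) * (Real.exp (-(lf * Tc) / u)) ^ (max i.val j - min i.val j))) (n + 1)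
    _ = u * (1 - u) * ∑ i ∈ Finset.range (n + 1), ∑ j ∈ Finset.range (n + 1),
          w i * w j * (Real.exp (-(lf * Tc) / u)) ^ (max i j - min i j) := by
        rw [Finset.mul_sum]
        refine Finset.sum_congr rfl fun i _ => ?_
        rw [Finset.mul_sum]
        exact Finset.sum_congr rfl fun j _ => by ring
    _ = _ := by rw [comb n w (Real.exp (-(lf * Tc) / u))]
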